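/- Let α = β = 2π − 4·arccos(1/3), a = b = arccos((1+3cos α)/4), α' = β' = arccos((1 − cos a)/(√3 sin a)), and ω = arccos((cos(π/3) − cos a · cos b)/(sin a · sin b)). Then α' + β' + ω ∉ {2π − k·arccos(1/3) : k ∈ {1,2,3,4}}. -/

import Mathlib

set_option maxHeartbeats 1000000

open Real

private lemma cos2u_bounds (u : ℝ) (h0 : 0 ≤ u) (h1 : u ≤ 1) :
    1 - 2*(u - u^3/6 + u^4*(5/96))^2 ≤ Real.cos (2*u) ∧
    Real.cos (2*u) ≤ 1 - 2*(u - u^3/6 - u^4*(5/96))^2 := by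
  have hb := Real.sin_bound (x := u) (by rwa [abs_of_nonneg h0])
  rw [abs_of_nonneg h0, abs_le] at hb
  have hc : Real.cos (2*u) = 1 - 2 * Real.sin u ^ 2 := by
    have := Real.sin_sq_add_cos_sq u
    rw [Real.cos_two_mul]; nlinarith
  have h2 : u*u ≤ 1 := mul_le_one₀ h1 h0 h1
  have h3 : u^3 ≤ u := by nlinarith [mul_nonneg h0 h0]
  have h4 : u^4 ≤ u := by nlinarith [mul_nonneg h0 h0, mul_nonneg (mul_nonneg h0 h0) h0]
  have hplow : 0 ≤ u - u^3/6 - u^4*(5/96) := by linarith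
  have hq : Real.sin u ≤ u - u^3/6 + u^4*(5/96) := by linarith [hb.2, pow_le_pow_of_le_one h0 h1 (show 4 ≤ 5 by norm_num), pow_nonneg h0 4]
  have hp : u - u^3/6 - u^4*(5/96) ≤ Real.sin u := by linarith [hb.1, pow_le_pow_of_le_one h0 h1 (show 4 ≤ 5 by norm_num), pow_nonneg h0 4]
  have hs1 : Real.sin u ^ 2 ≤ (u - u^3/6 + u^4*(5/96)) ^ 2 :=
    pow_le_pow_left₀ (by linarith) hq 2
  have hs2 : (u - u^3/6 - u^4*(5/96)) ^ 2 ≤ Real.sin u ^ 2 :=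
    pow_le_pow_left₀ hplow hp 2
  constructor <;> linarith

private lemma arccos_lt_of (x t : ℝ) (h0 : 0 ≤ t) (hπ : t ≤ Real.pi) (hx1 : x ≤ 1)
    (h : Real.cos t < x) : Real.arccos x < t := by
  have hmem1 : x ∈ Set.Icc (-1:ℝ) 1 := ⟨le_of_lt (lt_of_le_of_lt (Real.neg_one_le_cos t) h), hx1⟩
  have hmem2 : Real.cos t ∈ Set.Icc (-1:ℝ) 1 := ⟨Real.neg_one_le_cos t, Real.cos_le_one t⟩
  have := Real.strictAntiOn_arccos hmem2 hmem1 h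
  rwa [Real.arccos_cos h0 hπ] at this

private lemma lt_arccos_of (x t : ℝ) (h0 : 0 ≤ t) (hπ : t ≤ Real.pi) (hx1 : -1 ≤ x)
    (h : x < Real.cos t) : t < Real.arccos x := by
  have hmem1 : x ∈ Set.Icc (-1:ℝ) 1 := ⟨hx1, le_of_lt (lt_of_lt_of_le h (Real.cos_le_one t))⟩
  have hmem2 : Real.cos t ∈ Set.Icc (-1:ℝ) 1 := ⟨Real.neg_one_le_cos t, Real.cos_le_one t⟩
  have := Real.strictAntiOn_arccos hmem1 hmem2 h
  rwa [Real.arccos_cos h0 hπ] at this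

theorem stmt_5 (α β a b α' β' ω : ℝ)
    (hα : α = 2 * Real.pi - 4 * Real.arccos (1/3)) (hβ : β = α)
    (ha : a = Real.arccos ((1 + 3 * Real.cos α) / 4)) (hb : b = a)
    (hα' : α' = Real.arccos ((1 - Real.cos a) / (Real.sqrt 3 * Real.sin a))) (hβ' : β' = α')
    (hω : ω = Real.arccos ((Real.cos (Real.pi/3) - Real.cos a * Real.cos b) /
      (Real.sin a * Real.sin b))) :
    α' + β' + ω ∉
      {x : ℝ | ∃ k ∈ ({1, 2, 3, 4} : Set ℕ), x = 2 * Real.pi - k * Real.arccos (1/3)} := by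
  have hπlb := Real.pi_gt_d6
  have hπub := Real.pi_lt_d2
  set c := Real.arccos (1/3 : ℝ) with hcdef
  have hc : Real.cos c = 1/3 := Real.cos_arccos (by norm_num) (by norm_num)
  -- cos α = 17/81
  have hcosα : Real.cos α = 17/81 := by
    have h2 : Real.cos (2*c) = -7/9 := by rw [Real.cos_two_mul, hc]; norm_num
    have h4 : Real.cos (4*c) = 17/81 := by
      rw [show (4:ℝ)*c = 2*(2*c) by ring, Real.cos_two_mul, h2]; norm_num
    rw [hα, Real.cos_two_pi_sub, h4]
  -- a = arccos (11/27)
  have ha' : a = Real.arccos (11/27) := by rw [ha, hcosα]; norm_num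
  have hcosa : Real.cos a = 11/27 := by
    rw [ha']; exact Real.cos_arccos (by norm_num) (by norm_num)
  have hsina : Real.sin a = Real.sqrt (1 - (11/27)^2) := by rw [ha', Real.sin_arccos]
  have hs2 : Real.sin a ^ 2 = 608/729 := by
    rw [hsina, Real.sq_sqrt (by norm_num)]; norm_num
  have hspos : 0 < Real.sin a := by rw [hsina]; positivity
  -- ω = arccos (487/1216)
  have hω' : ω = Real.arccos (487/1216) := by
    rw [hω, hb, show Real.sin a * Real.sin a = Real.sin a ^ 2 by ring, hs2, hcosa,
      Real.cos_pi_div_three]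
    norm_num
  -- the argument of α'
  set x₁ := (1 - Real.cos a) / (Real.sqrt 3 * Real.sin a) with hx₁def
  have hDpos : 0 < Real.sqrt 3 * Real.sin a := by positivity
  have hD2 : (Real.sqrt 3 * Real.sin a)^2 = 608/243 := by
    rw [mul_pow, Real.sq_sqrt (by norm_num : (3:ℝ) ≥ 0), hs2]; norm_num
  have hx₁pos : 0 < x₁ := by
    rw [hx₁def, hcosa]; positivity
  have hx₁sq : x₁^2 = 8/57 := by
    rw [hx₁def, div_pow, hD2, hcosa]; norm_num
  have hx₁lt1 : x₁ ≤ 1 := by nlinarith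
  -- numeric cosine bounds
  have hb121 := cos2u_bounds (121/200) (by norm_num) (by norm_num)
  have hb115 := cos2u_bounds (115/200) (by norm_num) (by norm_num)
  have hb118 := cos2u_bounds (118/200) (by norm_num) (by norm_num)
  have hb110 := cos2u_bounds (110/200) (by norm_num) (by norm_num)
  have hb126 := cos2u_bounds (126/200) (by norm_num) (by norm_num)
  have hb120 := cos2u_bounds (120/200) (by norm_num) (by norm_num)
  rw [show (2:ℝ)*(121/200) = 121/100 by norm_num] at hb121
  norm_num at hb121
  rw [show (2:ℝ)*(115/200) = 115/100 by norm_num] at hb115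
  norm_num at hb115
  rw [show (2:ℝ)*(118/200) = 118/100 by norm_num] at hb118
  norm_num at hb118
  rw [show (2:ℝ)*(110/200) = 110/100 by norm_num] at hb110
  norm_num at hb110
  rw [show (2:ℝ)*(126/200) = 126/100 by norm_num] at hb126
  norm_num at hb126
  rw [show (2:ℝ)*(120/200) = 120/100 by norm_num] at hb120
  norm_num at hb120
  have e121u : Real.cos (121/100) ≤ 0.3704 := by linarith [hb121.2]
  have e121l : (0.33:ℝ) ≤ Real.cos (121/100) := by linarith [hb121.1]
  have e115l : (0.3971:ℝ) ≤ Real.cos (115/100) := by linarith [hb115.1]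
  have e118u : Real.cos (118/100) ≤ 0.3962 := by linarith [hb118.2]
  have e110l : (0.4444:ℝ) ≤ Real.cos (110/100) := by linarith [hb110.1]
  have e126u : Real.cos (126/100) ≤ 0.327 := by linarith [hb126.2]
  have e120l : (0.3484:ℝ) ≤ Real.cos (120/100) := by linarith [hb120.1]
  -- bounds on α'
  have hAub : α' < 121/100 := by
    rw [hα']
    refine arccos_lt_of _ _ (by norm_num) (by linarith) hx₁lt1 ?_
    have h1 : Real.cos (121/100) ^ 2 ≤ (0.3704:ℝ)^2 :=
      pow_le_pow_left₀ (by linarith) e121u 2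
    have h2 : Real.cos (121/100) ^ 2 < x₁ ^ 2 := by
      rw [hx₁sq]; norm_num at h1 ⊢; linarith
    exact lt_of_pow_lt_pow_left₀ 2 hx₁pos.le h2
  have hAlb : 115/100 < α' := by
    rw [hα']
    refine lt_arccos_of _ _ (by norm_num) (by linarith) (by linarith) ?_
    have h1 : (0.3971:ℝ)^2 ≤ Real.cos (115/100) ^ 2 :=
      pow_le_pow_left₀ (by norm_num) e115l 2
    have h2 : x₁ ^ 2 < Real.cos (115/100) ^ 2 := by
      rw [hx₁sq]; norm_num at h1 ⊢; linarith
    exact lt_of_pow_lt_pow_left₀ 2 (by linarith) h2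
  -- bounds on ω
  have hWub : ω < 118/100 := by
    rw [hω']
    refine arccos_lt_of _ _ (by norm_num) (by linarith) (by norm_num) ?_
    calc Real.cos (118/100) ≤ 0.3962 := e118u
      _ < 487/1216 := by norm_num
  have hWlb : 110/100 < ω := by
    rw [hω']
    refine lt_arccos_of _ _ (by norm_num) (by linarith) (by norm_num) ?_
    calc (487/1216 : ℝ) < 0.4444 := by norm_num
      _ ≤ Real.cos (110/100) := e110l
  -- bounds on c
  have hcub : c < 126/100 := by
    rw [hcdef]
    refine arccos_lt_of _ _ (by norm_num) (by linarith) (by norm_num) ?_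
    calc Real.cos (126/100) ≤ 0.327 := e126u
      _ < 1/3 := by norm_num
  have hclb : 120/100 < c := by
    rw [hcdef]
    refine lt_arccos_of _ _ (by norm_num) (by linarith) (by norm_num) ?_
    calc (1/3 : ℝ) < 0.3484 := by norm_num
      _ ≤ Real.cos (120/100) := e120l
  -- finish
  rintro ⟨k, hk, heq⟩
  rw [hβ'] at heq
  simp only [Set.mem_insert_iff, Set.mem_singleton_iff] at hk
  rcases hk with rfl | rfl | rfl | rfl <;> push_cast at heq <;> linarith
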